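/- arXiv:2309.07363 — 2 statements merged into one kernel-verified Lean document; each statement's English description precedes it below -/
import Mathlib

section
/- Let Θ and X be finite nonempty sets, u : X × Θ → ℝ, and let x : Θ → Δ(X) be a cyclically monotone social choice function. Let π ∈ Δ(Θ) and K ≥ 1. Then there exists a map σ : Θ^K → Δ(Θ)^K such that for every θ ∈ Θ^K, σ(θ) is a feasible report vector at quota π maximizing the payoff (1/K)·Σ_k ū(x(σ(θ)^k),θ^k) among all feasible report vectors at quota π, and the expected decision error under i.i.d. draws from π satisfies Σ_{θ∈Θ^K} (Π_k π(θ^k))·(1/K)·Σ_{k=1}^K ‖x(σ(θ)^k) − x(θ^k)‖ ≤ (1/(2√K))·(|Θ| − 1)^{3/2}. -/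
open Finset

/-- `p` is a probability vector on the finite set `Z`. -/
def IsProbVec {Z : Type*} [Fintype Z] (p : Z → ℝ) : Prop :=
  (∀ z, 0 ≤ p z) ∧ ∑ z, p z = 1

/-- Total variation distance `‖p − q‖ = (1/2)·Σ_z |p z − q z|`. -/
noncomputable def tv {Z : Type*} [Fintype Z] (p q : Z → ℝ) : ℝ :=
  (∑ z, |p z - q z|) / 2

/-- Lifted utility: `ū(μ,θ) = Σ_a μ(a)·u(a,θ)` for a lottery `μ ∈ Δ(X)`. -/
noncomputable def ubar {Θ X : Type*} [Fintype X]
    (u : X × Θ → ℝ) (μ : X → ℝ) (θ : Θ) : ℝ :=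
  ∑ a, μ a * u (a, θ)

/-- Linear extension of the social choice function `x : Θ → Δ(X)` to `Δ(Θ)`:
`x(r) = Σ_{θ'} r(θ')·x(θ')`. -/
noncomputable def liftSCF {Θ X : Type*} [Fintype Θ]
    (x : Θ → X → ℝ) (r : Θ → ℝ) : X → ℝ :=
  fun a => ∑ θ', r θ' * x θ' a

/-- `x : Θ → Δ(X)` is cyclically monotone for the utility `u`. -/
def CyclMonoSCF {Θ X : Type*} [Fintype X] (u : X × Θ → ℝ) (x : Θ → X → ℝ) : Prop :=
  ∀ J : ℕ, ∀ θs : Fin (J + 2) → Θ, Function.Injective θs →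
    ∑ j, ubar u (x (θs (j + 1))) (θs j) ≤ ∑ j, ubar u (x (θs j)) (θs j)

/-- `r = (r^1,…,r^K)` is a feasible report vector at quota `q`:
each `r^k ∈ Δ(Θ)` and `(1/K)·Σ_k r^k = q`. -/
def Feasible {Θ : Type*} [Fintype Θ] (K : ℕ) (q : Θ → ℝ)
    (r : Fin K → Θ → ℝ) : Prop :=
  (∀ k, IsProbVec (r k)) ∧ ∀ θ', (∑ k, r k θ') / K = q θ'

/-- Payoff of the report vector `r` at the type vector `θv`:
`(1/K)·Σ_k ū(x(r^k),θ^k)`. -/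
noncomputable def payoff {Θ X : Type*} [Fintype Θ] [Fintype X]
    (u : X × Θ → ℝ) (x : Θ → X → ℝ) (K : ℕ)
    (θv : Fin K → Θ) (r : Fin K → Θ → ℝ) : ℝ :=
  (∑ k, ubar u (liftSCF x (r k)) (θv k)) / K

/-- Empirical distribution of a type vector: `(marg θ)(θ') = |{k : θ^k = θ'}|/K`. -/
noncomputable def marg {Θ : Type*} [Fintype Θ] [DecidableEq Θ] (K : ℕ)
    (θv : Fin K → Θ) : Θ → ℝ :=
  fun θ' => ((Finset.univ.filter (fun k => θv k = θ')).card : ℝ) / K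



/-- There is no simple directed cycle in the support of `f`. -/
def NoCycleQ {Θ : Type*} (f : Θ → Θ → ℝ) : Prop :=
  ¬ ∃ (J : ℕ) (θs : Fin (J + 2) → Θ), Function.Injective θs ∧
      ∀ j, 0 < f (θs j) (θs (j + 1))

lemma exists_simple_cycle {Θ : Type*} [Finite Θ] (R : Θ → Θ → Prop)
    (hirr : ∀ a, ¬ R a a) (g : ℕ → Θ) (hg : ∀ i, R (g i) (g (i + 1))) :
    ∃ (J : ℕ) (θs : Fin (J + 2) → Θ), Function.Injective θs ∧
      ∀ j, R (θs j) (θs (j + 1)) := by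
  have hP : ∃ d, 0 < d ∧ ∃ i, g i = g (i + d) := by
    obtain ⟨a, b, hab, hgab⟩ := Finite.exists_ne_map_eq_of_infinite g
    rcases lt_or_gt_of_ne hab with h | h
    · exact ⟨b - a, by omega, a, by rw [hgab]; congr 1; omega⟩
    · exact ⟨a - b, by omega, b, by rw [← hgab]; congr 1; omega⟩
  classical
  obtain ⟨hd0, i, hi⟩ := Nat.find_spec hP
  set d := Nat.find hP with hd
  have hd2 : 2 ≤ d := by
    by_contra h
    have hd1 : d = 1 := by omega
    rw [hd1] at hi
    exact hirr (g i) (hi ▸ hg i)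
  obtain ⟨J, hJ⟩ : ∃ J, d = J + 2 := ⟨d - 2, by omega⟩
  have hmin : ∀ dd, 0 < dd → dd < d → ∀ ii, g ii ≠ g (ii + dd) := by
    intro dd h1 h2 ii hgg
    exact Nat.find_min hP h2 ⟨h1, ii, hgg⟩
  refine ⟨J, fun k => g (i + k.val), ?_, ?_⟩
  · intro k l hkl
    simp only at hkl
    by_contra hne
    have hvalne : k.val ≠ l.val := fun h => hne (Fin.ext h)
    rcases Nat.lt_or_ge k.val l.val with h | h
    · exact hmin (l.val - k.val) (by omega) (by omega) (i + k.val)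
        (by rw [hkl]; congr 1; omega)
    · exact hmin (k.val - l.val) (by omega) (by omega) (i + l.val)
        (by rw [← hkl]; congr 1; omega)
  · intro j
    show R (g (i + j.val)) (g (i + ((j + 1 : Fin (J + 2))).val))
    rcases Nat.lt_or_ge (j.val + 1) (J + 2) with h | h
    · have hval : ((j + 1 : Fin (J + 2))).val = j.val + 1 := by
        simp [Fin.add_def, Nat.mod_eq_of_lt h]
      rw [hval]
      have := hg (i + j.val)
      simpa [← Nat.add_assoc] using this
    · have hj : j.val = J + 1 := by omega
      have hval : ((j + 1 : Fin (J + 2))).val = 0 := by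
        simp [Fin.add_def, hj]
      rw [hval, hj]
      have := hg (i + (J + 1))
      have h2 : g (i + (J + 1) + 1) = g i := by
        rw [show i + (J + 1) + 1 = i + d by omega, ← hi]
      rw [h2] at this
      simpa using this

lemma exists_source {Θ : Type*} [Fintype Θ] (f : Θ → Θ → ℝ)
    (hnn : ∀ a b, 0 ≤ f a b) (hd : ∀ a, f a a = 0) (hnc : NoCycleQ f)
    (a0 b0 : Θ) (h0 : 0 < f a0 b0) :
    ∃ v, (∃ b, 0 < f v b) ∧ ∀ b, f b v = 0 := by
  by_contra hcon
  push_neg at hcon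
  -- every vertex with positive out-mass has a predecessor with positive out-mass
  have H : ∀ v : {v : Θ // ∃ b, 0 < f v b}, ∃ u : {v : Θ // ∃ b, 0 < f v b},
      0 < f u.1 v.1 := by
    rintro ⟨v, hv⟩
    obtain ⟨b, hb⟩ := hcon v hv
    have hub : 0 < f b v := (hnn b v).lt_of_ne (Ne.symm hb)
    exact ⟨⟨b, ⟨v, hub⟩⟩, hub⟩
  choose nxt hnxt using H
  set g : ℕ → Θ := fun n => (nxt^[n] ⟨a0, b0, h0⟩).1 with hgdef
  have hwalk : ∀ n, 0 < f (g (n + 1)) (g n) := by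
    intro n
    have : nxt^[n + 1] ⟨a0, b0, h0⟩ = nxt (nxt^[n] ⟨a0, b0, h0⟩) :=
      Function.iterate_succ_apply' _ _ _
    simpa [hgdef, this] using hnxt (nxt^[n] ⟨a0, b0, h0⟩)
  obtain ⟨J, θs, hinj, hcyc⟩ := exists_simple_cycle (fun a b => 0 < f b a)
    (fun a h => absurd h (by simp [hd a])) g hwalk
  refine hnc ⟨J, fun j => θs (-j), hinj.comp neg_injective, fun j => ?_⟩
  have := hcyc (-j - 1)
  simpa [show -j - 1 + 1 = -j by abel, show -(j + 1) = -j - 1 by abel] using this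

lemma nocycle_sum_bound {Θ : Type*} [Fintype Θ] [DecidableEq Θ]
    (S : Finset Θ) :
    ∀ f : Θ → Θ → ℝ, (∀ a b, 0 ≤ f a b) → (∀ a, f a a = 0) →
      (∀ a b, 0 < f a b → a ∈ S ∧ b ∈ S) → NoCycleQ f →
      ∑ a, ∑ b, f a b ≤ (S.card - 1 : ℕ) *
        ∑ a, max (∑ b, f a b - ∑ b, f b a) 0 := by
  classical
  induction S using Finset.strongInduction with
  | _ S ih =>
  intro f hnn hdiag hsupp hnc
  by_cases hzero : ∀ a b, f a b = 0
  · have h1 : ∑ a, ∑ b, f a b = 0 := by simp [hzero]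
    rw [h1]
    positivity
  push_neg at hzero
  obtain ⟨a0, b0, hab⟩ := hzero
  have h0 : 0 < f a0 b0 := (hnn a0 b0).lt_of_ne (Ne.symm hab)
  obtain ⟨v, ⟨bv, hbv⟩, hvin⟩ := exists_source f hnn hdiag hnc a0 b0 h0
  have hvS : v ∈ S := (hsupp v bv hbv).1
  have hbvS : bv ∈ S := (hsupp v bv hbv).2
  have hvbv : v ≠ bv := fun h => by rw [h, hdiag] at hbv; exact lt_irrefl 0 hbv
  have hScard : 2 ≤ S.card := Finset.one_lt_card.mpr ⟨v, hvS, bv, hbvS, hvbv⟩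
  set f' : Θ → Θ → ℝ := fun a b => if a = v then 0 else f a b with hf'
  set s : ℝ := ∑ a, max (∑ b, f a b - ∑ b, f b a) 0 with hs
  have hs_nn : 0 ≤ s := Finset.sum_nonneg fun a _ => le_max_right _ _
  have key := ih (S.erase v) (Finset.erase_ssubset hvS) f'
    (fun a b => by by_cases h : a = v <;> simp [hf', h, hnn])
    (fun a => by by_cases h : a = v <;> simp [hf', h, hdiag])
    (fun a b hab' => by
      have hav : a ≠ v := by intro h; simp [hf', h] at hab'
      have hfab : 0 < f a b := by simpa [hf', hav] using hab'
      have hbv' : b ≠ v := by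
        intro h; rw [h, hvin a] at hfab; exact lt_irrefl 0 hfab
      exact ⟨Finset.mem_erase.mpr ⟨hav, (hsupp a b hfab).1⟩,
        Finset.mem_erase.mpr ⟨hbv', (hsupp a b hfab).2⟩⟩)
    (fun ⟨J, θs, hinj, hcyc⟩ => hnc ⟨J, θs, hinj, fun j => by
      have := hcyc j
      by_cases h : θs j = v <;> simp [hf', h] at this ⊢
      · exact this⟩)
  -- out v
  set ov : ℝ := ∑ b, f v b with hov
  have hov_pos : 0 < ov :=
    lt_of_lt_of_le hbv (Finset.single_le_sum (fun b _ => hnn v b) (mem_univ bv))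
  have h1 : ∀ a, ∑ b, f' a b = if a = v then 0 else ∑ b, f a b := by
    intro a; by_cases h : a = v <;> simp [hf', h]
  have h2 : ∀ a, ∑ b, f' b a = (∑ b, f b a) - f v a := by
    intro a
    have : ∀ b, f' b a = f b a - (if b = v then f b a else 0) := by
      intro b; by_cases h : b = v <;> simp [hf', h]
    rw [Finset.sum_congr rfl (fun b _ => this b), Finset.sum_sub_distrib,
      Finset.sum_ite_eq' univ v (fun b => f b a)]
    simp
  have hcolv : ∑ b, f b v = 0 := Finset.sum_eq_zero (fun b _ => hvin b)
  -- total sum split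
  have hsplit : ∑ a, ∑ b, f a b = ov + ∑ a, ∑ b, f' a b := by
    rw [Finset.sum_congr rfl (fun a (_ : a ∈ univ) => h1 a)]
    rw [← Finset.add_sum_erase univ (fun a => ∑ b, f a b) (mem_univ v)]
    congr 1
    rw [← Finset.sum_erase (f := fun a => if a = v then (0:ℝ) else ∑ b, f a b) (a := v) univ
      (by simp)]
    exact (Finset.sum_congr rfl (fun a ha => by
      rw [if_neg (Finset.ne_of_mem_erase ha)])).symm
  -- max-div of v
  have hdivv : max (∑ b, f v b - ∑ b, f b v) 0 = ov := by
    rw [hcolv, sub_zero, max_eq_left hov_pos.le]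
  have hov_le_s : ov ≤ s := by
    rw [hs, ← hdivv]
    exact Finset.single_le_sum (f := fun a => max (∑ b, f a b - ∑ b, f b a) 0)
      (fun a _ => le_max_right _ (0:ℝ)) (mem_univ v)
  -- sum of max-div of f' bounded by s
  have hdiv' : ∑ a, max (∑ b, f' a b - ∑ b, f' b a) 0 ≤ s := by
    have hterm : ∀ a, max (∑ b, f' a b - ∑ b, f' b a) 0 ≤
        (if a = v then 0 else max (∑ b, f a b - ∑ b, f b a) 0 + f v a) := by
      intro a
      rw [h1 a, h2 a]
      by_cases h : a = v
      · subst h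
        simp [hcolv, hdiag]
      · rw [if_neg h]
        have hre : (∑ b, f a b) - ((∑ b, f b a) - f v a) =
            ((∑ b, f a b) - (∑ b, f b a)) + f v a := by ring
        rw [if_neg h, hre]
        exact max_le (add_le_add_left (le_max_left _ _) _)
          (add_nonneg (le_max_right _ _) (hnn v a))
    calc ∑ a, max (∑ b, f' a b - ∑ b, f' b a) 0
        ≤ ∑ a, (if a = v then 0 else max (∑ b, f a b - ∑ b, f b a) 0 + f v a) :=
          Finset.sum_le_sum (fun a _ => hterm a)
      _ = ∑ a ∈ univ.erase v, (max (∑ b, f a b - ∑ b, f b a) 0 + f v a) := by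
          rw [← Finset.sum_erase (f := fun a => if a = v then (0:ℝ) else
            max (∑ b, f a b - ∑ b, f b a) 0 + f v a) (a := v) univ (by simp)]
          exact Finset.sum_congr rfl (fun a ha => by
            rw [if_neg (Finset.ne_of_mem_erase ha)])
      _ = (∑ a ∈ univ.erase v, max (∑ b, f a b - ∑ b, f b a) 0) +
            ∑ a ∈ univ.erase v, f v a := Finset.sum_add_distrib
      _ = (s - ov) + (ov - f v v) := by
          rw [Finset.sum_erase_eq_sub (mem_univ v), Finset.sum_erase_eq_sub (mem_univ v),
            hdivv, hs, hov]
      _ ≤ s := by rw [hdiag v]; ring_nf; exact le_refl s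
  -- conclusion
  have hdiv'_nn : (0:ℝ) ≤ ∑ a, max (∑ b, f' a b - ∑ b, f' b a) 0 :=
    Finset.sum_nonneg (fun a _ => le_max_right _ _)
  have hcard : ((S.erase v).card - 1 : ℕ) = S.card - 2 := by
    rw [Finset.card_erase_of_mem hvS]; omega
  have hcast : ((S.card - 2 : ℕ) : ℝ) + 1 = ((S.card - 1 : ℕ) : ℝ) := by
    have : S.card - 2 + 1 = S.card - 1 := by omega
    rw [← this]; push_cast; ring
  calc ∑ a, ∑ b, f a b = ov + ∑ a, ∑ b, f' a b := hsplit
    _ ≤ ov + ((S.erase v).card - 1 : ℕ) * s := by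
        refine add_le_add_right (le_trans key ?_) ov
        exact mul_le_mul_of_nonneg_left hdiv' (by positivity)
    _ ≤ s + ((S.card - 2 : ℕ) : ℝ) * s := by rw [hcard]; exact add_le_add_left hov_le_s _
    _ = (((S.card - 2 : ℕ) : ℝ) + 1) * s := by ring
    _ = ((S.card - 1 : ℕ) : ℝ) * s := by rw [hcast]

section Coupling
variable {Θ X : Type*} [Fintype Θ] [Fintype X] [DecidableEq Θ]

lemma sum_offdiag_eq {γ : Θ → Θ → ℝ} (a : Θ) :
    ∑ b, (if a = b then 0 else γ a b) = (∑ b, γ a b) - γ a a := by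
  have : ∀ b, (if a = b then 0 else γ a b) = γ a b - (if a = b then γ a b else 0) := by
    intro b; by_cases h : a = b <;> simp [h]
  rw [Finset.sum_congr rfl (fun b _ => this b), Finset.sum_sub_distrib,
    Finset.sum_ite_eq univ a (fun b => γ a b)]
  simp

lemma sum_offdiag_eq' {γ : Θ → Θ → ℝ} (b : Θ) :
    ∑ a, (if a = b then 0 else γ a b) = (∑ a, γ a b) - γ b b := by
  have : ∀ a, (if a = b then 0 else γ a b) = γ a b - (if a = b then γ a b else 0) := by
    intro a; by_cases h : a = b <;> simp [h]
  rw [Finset.sum_congr rfl (fun a _ => this a), Finset.sum_sub_distrib,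
    Finset.sum_ite_eq' univ b (fun a => γ a b)]
  simp

lemma exists_opt_coupling (u : X × Θ → ℝ) (x : Θ → X → ℝ) (hcm : CyclMonoSCF u x)
    (m π : Θ → ℝ) (hm : IsProbVec m) (hπ : IsProbVec π) :
    ∃ γ : Θ → Θ → ℝ, (∀ a b, 0 ≤ γ a b) ∧ (∀ a, ∑ b, γ a b = m a) ∧
      (∀ b, ∑ a, γ a b = π b) ∧
      (∀ γ' : Θ → Θ → ℝ, (∀ a b, 0 ≤ γ' a b) → (∀ a, ∑ b, γ' a b = m a) →
        (∀ b, ∑ a, γ' a b = π b) →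
        ∑ a, ∑ b, γ' a b * ubar u (x b) a ≤ ∑ a, ∑ b, γ a b * ubar u (x b) a) ∧
      1 - ∑ a, γ a a ≤ (Fintype.card Θ - 1 : ℕ) * ∑ a, max (m a - π a) 0 := by
  classical
  set c : Θ → Θ → ℝ := fun a b => ubar u (x b) a with hc
  set C : Set (Θ → Θ → ℝ) := {γ | (∀ a b, 0 ≤ γ a b) ∧ (∀ a, ∑ b, γ a b = m a) ∧
    (∀ b, ∑ a, γ a b = π b)} with hC
  set L : (Θ → Θ → ℝ) → ℝ := fun γ => ∑ a, ∑ b, γ a b * c a b with hL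
  set T : (Θ → Θ → ℝ) → ℝ := fun γ => ∑ a, γ a a with hT
  have hLcont : Continuous L := by
    apply continuous_finset_sum; intro a _
    apply continuous_finset_sum; intro b _
    exact ((continuous_apply b).comp (continuous_apply a) :
      Continuous fun γ : Θ → Θ → ℝ => γ a b).mul continuous_const
  have hTcont : Continuous T := by
    apply continuous_finset_sum; intro a _
    exact (continuous_apply a).comp (continuous_apply a)
  have hCne : (fun a b => m a * π b) ∈ C := by
    refine ⟨fun a b => mul_nonneg (hm.1 a) (hπ.1 b), fun a => ?_, fun b => ?_⟩
    · rw [← Finset.mul_sum, hπ.2, mul_one]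
    · rw [← Finset.sum_mul, hm.2, one_mul]
  have hCclosed : IsClosed C := by
    have h1 : IsClosed {γ : Θ → Θ → ℝ | ∀ a b, 0 ≤ γ a b} := by
      rw [Set.setOf_forall]
      refine isClosed_iInter (fun a => ?_)
      rw [Set.setOf_forall]
      refine isClosed_iInter (fun b => ?_)
      exact isClosed_le continuous_const ((continuous_apply b).comp (continuous_apply a))
    have h2 : IsClosed {γ : Θ → Θ → ℝ | ∀ a, ∑ b, γ a b = m a} := by
      rw [Set.setOf_forall]
      refine isClosed_iInter (fun a => ?_)
      exact isClosed_eq (continuous_finset_sum _ (fun b _ =>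
        (continuous_apply b).comp (continuous_apply a))) continuous_const
    have h3 : IsClosed {γ : Θ → Θ → ℝ | ∀ b, ∑ a, γ a b = π b} := by
      rw [Set.setOf_forall]
      refine isClosed_iInter (fun b => ?_)
      exact isClosed_eq (continuous_finset_sum _ (fun a _ =>
        (continuous_apply b).comp (continuous_apply a))) continuous_const
    exact h1.inter (h2.inter h3)
  have hCsub : C ⊆ Set.univ.pi (fun _ : Θ => Set.univ.pi fun _ : Θ => Set.Icc (0:ℝ) 1) := by
    rintro γ ⟨hnn, hrow, _⟩ a _
    intro b _
    refine ⟨hnn a b, ?_⟩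
    calc γ a b ≤ ∑ b', γ a b' := Finset.single_le_sum (fun b' _ => hnn a b') (mem_univ b)
      _ = m a := hrow a
      _ ≤ ∑ a', m a' := Finset.single_le_sum (fun a' _ => hm.1 a') (mem_univ a)
      _ = 1 := hm.2
  have hCcomp : IsCompact C := by
    refine IsCompact.of_isClosed_subset ?_ hCclosed hCsub
    exact isCompact_univ_pi (fun a => isCompact_univ_pi (fun b => isCompact_Icc))
  obtain ⟨γ₁, hγ₁C, hγ₁max⟩ := hCcomp.exists_isMaxOn ⟨_, hCne⟩ hLcont.continuousOn
  set A : Set (Θ → Θ → ℝ) := C ∩ {γ | L γ₁ ≤ L γ} with hA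
  have hAcomp : IsCompact A := hCcomp.inter_right (isClosed_le continuous_const hLcont)
  have hAne : A.Nonempty := ⟨γ₁, hγ₁C, show L γ₁ ≤ L γ₁ from le_rfl⟩
  obtain ⟨γ, hγA, hγT⟩ := hAcomp.exists_isMaxOn hAne hTcont.continuousOn
  obtain ⟨⟨hγnn, hγrow, hγcol⟩, hγL⟩ := hγA
  have hγmax : ∀ γ' ∈ C, L γ' ≤ L γ := fun γ' h => le_trans (hγ₁max h) hγL
  -- the optimal coupling has no cycle in its off-diagonal support
  have hNC : NoCycleQ (fun a b => if a = b then 0 else γ a b) := by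
    rintro ⟨J, θs, hinj, hpos⟩
    have hone : (1 : Fin (J + 2)) ≠ 0 := by
      intro h
      have := congrArg Fin.val h
      simp [Fin.val_one] at this
    have hjne : ∀ j : Fin (J + 2), j + 1 ≠ j := by
      intro j h
      exact hone (by
        have : j + 1 = j + 0 := by rw [add_zero]; exact h
        exact add_left_cancel this)
    have hneq : ∀ j, θs j ≠ θs (j + 1) := by
      intro j h
      exact hjne j (hinj (Eq.symm h))
    have hpos' : ∀ j, 0 < γ (θs j) (θs (j + 1)) := by
      intro j
      have := hpos j
      simp only at this
      rwa [if_neg (hneq j)] at this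
    have hfne : (Finset.univ : Finset (Fin (J + 2))).Nonempty := ⟨0, mem_univ 0⟩
    set ε := Finset.univ.inf' hfne (fun j => γ (θs j) (θs (j + 1))) with hε
    have hεpos : 0 < ε := (Finset.lt_inf'_iff hfne).mpr (fun j _ => hpos' j)
    have hεle : ∀ j, ε ≤ γ (θs j) (θs (j + 1)) := fun j => Finset.inf'_le _ (mem_univ j)
    set δ : Θ → Θ → ℝ := fun p q => if p = q then 1 else 0 with hδ
    have hδsum : ∀ p, ∑ q, δ p q = 1 := by
      intro p; simp [hδ, Finset.sum_ite_eq]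
    have hδsum' : ∀ q, ∑ p, δ p q = 1 := by
      intro q; simp [hδ, Finset.sum_ite_eq']
    set D : Θ → Θ → ℝ :=
      fun a b => ∑ j, (δ (θs j) a * δ (θs j) b - δ (θs j) a * δ (θs (j + 1)) b) with hD
    set γ'' : Θ → Θ → ℝ := fun a b => γ a b + ε * D a b with hγ''
    -- rows of D vanish
    have hDrow : ∀ a, ∑ b, D a b = 0 := by
      intro a
      rw [hD]
      simp only
      rw [Finset.sum_comm]
      refine Finset.sum_eq_zero (fun j _ => ?_)
      rw [Finset.sum_sub_distrib, ← Finset.mul_sum, ← Finset.mul_sum, hδsum, hδsum]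
      ring
    -- columns of D vanish
    have hDcol : ∀ b, ∑ a, D a b = 0 := by
      intro b
      rw [hD]
      simp only
      rw [Finset.sum_comm]
      have hall : ∀ j : Fin (J + 2),
          ∑ a, (δ (θs j) a * δ (θs j) b - δ (θs j) a * δ (θs (j + 1)) b)
            = δ (θs j) b - δ (θs (j + 1)) b := by
        intro j
        rw [Finset.sum_sub_distrib, ← Finset.sum_mul, ← Finset.sum_mul, hδsum (θs j)]
        ring
      rw [Finset.sum_congr rfl (fun j _ => hall j), Finset.sum_sub_distrib]
      have hre : ∑ j : Fin (J + 2), δ (θs (j + 1)) b = ∑ j : Fin (J + 2), δ (θs j) b :=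
        Fintype.sum_equiv (Equiv.addRight (1 : Fin (J + 2)))
          (fun j => δ (θs (j + 1)) b) (fun j => δ (θs j) b) (fun j => rfl)
      rw [hre]; ring
    -- diagonal of the negative part vanishes
    have hNd : ∀ (a : Θ) (j : Fin (J + 2)), δ (θs j) a * δ (θs (j + 1)) a = 0 := by
      intro a j
      rw [hδ]
      simp only
      by_cases h1 : θs j = a
      · by_cases h2 : θs (j + 1) = a
        · exact absurd (h1.trans h2.symm) (hneq j)
        · simp [h2]
      · simp [h1]
    -- γ'' is a feasible coupling
    have hγ''C : γ'' ∈ C := by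
      refine ⟨?_, ?_, ?_⟩
      · intro a b
        by_cases hab : a = b
        · subst hab
          have : 0 ≤ D a a := by
            rw [hD]
            refine Finset.sum_nonneg (fun j _ => ?_)
            rw [hNd a j, sub_zero]
            positivity
          have := mul_nonneg hεpos.le this
          simp only [hγ'']
          linarith [hγnn a a]
        · -- off-diagonal: positive part of D vanishes
          have hP0 : ∀ j : Fin (J + 2), δ (θs j) a * δ (θs j) b = 0 := by
            intro j
            rw [hδ]
            simp only
            by_cases h1 : θs j = a
            · by_cases h2 : θs j = b
              · exact absurd (h1.symm.trans h2) hab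
              · simp [h2]
            · simp [h1]
          have hDab : D a b = -∑ j, δ (θs j) a * δ (θs (j + 1)) b := by
            rw [hD]
            simp only
            rw [Finset.sum_sub_distrib, Finset.sum_congr rfl (fun j _ => hP0 j)]
            simp
          by_cases hex : ∃ j, θs j = a ∧ θs (j + 1) = b
          · obtain ⟨j₀, hj1, hj2⟩ := hex
            have hNval : ∑ j, δ (θs j) a * δ (θs (j + 1)) b = 1 := by
              rw [Finset.sum_eq_single j₀]
              · rw [hδ]; simp [hj1, hj2]
              · intro j _ hjj
                rw [hδ]
                simp only
                by_cases h1 : θs j = a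
                · exact absurd (hinj (h1.trans hj1.symm)) hjj
                · simp [h1]
              · exact fun h => absurd (mem_univ j₀) h
            have : γ'' a b = γ a b - ε := by
              simp only [hγ'', hDab, hNval]; ring
            rw [this, sub_nonneg, ← hj1, ← hj2]
            exact hεle j₀
          · have hNval : ∑ j, δ (θs j) a * δ (θs (j + 1)) b = 0 := by
              refine Finset.sum_eq_zero (fun j _ => ?_)
              rw [hδ]
              simp only
              by_cases h1 : θs j = a
              · by_cases h2 : θs (j + 1) = b
                · exact absurd ⟨j, h1, h2⟩ hex
                · simp [h2]
              · simp [h1]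
            have : γ'' a b = γ a b := by
              simp only [hγ'', hDab, hNval]; ring
            rw [this]; exact hγnn a b
      · intro a
        simp only [hγ'']
        rw [Finset.sum_add_distrib, hγrow a, ← Finset.mul_sum, hDrow a, mul_zero, add_zero]
      · intro b
        simp only [hγ'']
        rw [Finset.sum_add_distrib, hγcol b, ← Finset.mul_sum, hDcol b, mul_zero, add_zero]
    -- value of L on the modification
    have hpick : ∀ p q : Θ, (∑ a, ∑ b, δ p a * δ q b * c a b) = c p q := by
      intro p q
      rw [hδ]
      simp [ite_mul, one_mul, zero_mul, Finset.sum_ite_eq]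
    have hLγ'' : L γ'' = L γ + ε * ∑ j, (c (θs j) (θs j) - c (θs j) (θs (j + 1))) := by
      simp only [hL, hγ'']
      have hexp : ∀ a b, (γ a b + ε * D a b) * c a b
          = γ a b * c a b + ε * (D a b * c a b) := fun a b => by ring
      rw [Finset.sum_congr rfl (fun a _ => Finset.sum_congr rfl (fun b _ => hexp a b))]
      rw [Finset.sum_congr rfl (fun a _ => Finset.sum_add_distrib),
        Finset.sum_add_distrib]
      congr 1
      rw [Finset.sum_congr rfl (fun a (_ : a ∈ univ) =>
        (Finset.mul_sum univ (fun b => D a b * c a b) ε).symm), ← Finset.mul_sum]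
      congr 1
      have hDc : ∀ a b, D a b * c a b
          = ∑ j, (δ (θs j) a * δ (θs j) b * c a b - δ (θs j) a * δ (θs (j + 1)) b * c a b) := by
        intro a b
        rw [hD]
        simp only
        rw [Finset.sum_mul]
        exact Finset.sum_congr rfl (fun j _ => by ring)
      rw [Finset.sum_congr rfl (fun a _ => Finset.sum_congr rfl (fun b _ => hDc a b))]
      rw [Finset.sum_congr rfl (fun a _ => Finset.sum_comm), Finset.sum_comm]
      refine Finset.sum_congr rfl (fun j _ => ?_)
      rw [Finset.sum_congr rfl (fun a (_ : a ∈ univ) => Finset.sum_sub_distrib _ _),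
        Finset.sum_sub_distrib, hpick, hpick]
    -- value of T on the modification
    have hTγ'' : T γ'' = T γ + ε * (J + 2 : ℕ) := by
      simp only [hT, hγ'']
      rw [Finset.sum_add_distrib, ← Finset.mul_sum]
      congr 2
      have : ∀ a, D a a = ∑ j, δ (θs j) a * δ (θs j) a := by
        intro a
        rw [hD]
        simp only
        rw [Finset.sum_sub_distrib, Finset.sum_congr rfl (fun j _ => hNd a j)]
        simp
      rw [Finset.sum_congr rfl (fun a _ => this a), Finset.sum_comm]
      have hsq : ∀ (j : Fin (J + 2)) (a : Θ), δ (θs j) a * δ (θs j) a = δ (θs j) a := by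
        intro j a; rw [hδ]; simp only; by_cases h : θs j = a <;> simp [h]
      rw [Finset.sum_congr rfl (fun j _ => Finset.sum_congr rfl (fun a _ => hsq j a))]
      rw [Finset.sum_congr rfl (fun j (_ : j ∈ univ) => hδsum (θs j))]
      simp
    -- cyclic monotonicity: the modification weakly improves L
    have hLle : L γ ≤ L γ'' := by
      rw [hLγ'']
      have := hcm J θs hinj
      have h2 : 0 ≤ ∑ j, (c (θs j) (θs j) - c (θs j) (θs (j + 1))) := by
        rw [Finset.sum_sub_distrib, sub_nonneg]
        exact this
      nlinarith
    have hγ''A : γ'' ∈ A := ⟨hγ''C, le_trans hγL hLle⟩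
    have := hγT hγ''A
    simp only [Set.mem_setOf_eq] at this
    rw [hTγ''] at this
    have hJpos : (0:ℝ) < (J + 2 : ℕ) := by positivity
    nlinarith
  -- apply the flow bound
  have hflow := nocycle_sum_bound (Finset.univ : Finset Θ)
    (fun a b => if a = b then 0 else γ a b)
    (fun a b => by by_cases h : a = b <;> simp [h, hγnn a b])
    (fun a => by simp)
    (fun a b _ => ⟨mem_univ a, mem_univ b⟩) hNC
  have hrow' : ∀ a, ∑ b, (if a = b then 0 else γ a b) = m a - γ a a := by
    intro a; rw [sum_offdiag_eq a, hγrow a]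
  have hcol' : ∀ b, ∑ a, (if a = b then 0 else γ a b) = π b - γ b b := by
    intro b; rw [sum_offdiag_eq' b, hγcol b]
  have htot : ∑ a, ∑ b, (if a = b then 0 else γ a b) = 1 - ∑ a, γ a a := by
    rw [Finset.sum_congr rfl (fun a _ => hrow' a), Finset.sum_sub_distrib, hm.2]
  have hdiv : ∀ a, (∑ b, (if a = b then 0 else γ a b)) -
      (∑ b, (if b = a then 0 else γ b a)) = m a - π a := by
    intro a
    rw [hrow' a, hcol' a]
    ring
  refine ⟨γ, hγnn, hγrow, hγcol, fun γ' h1 h2 h3 => hγmax γ' ⟨h1, h2, h3⟩, ?_⟩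
  rw [← htot]
  calc ∑ a, ∑ b, (if a = b then 0 else γ a b)
      ≤ ((Finset.univ : Finset Θ).card - 1 : ℕ) *
        ∑ a, max ((∑ b, (if a = b then 0 else γ a b)) -
          (∑ b, (if b = a then 0 else γ b a))) 0 := hflow
    _ = (Fintype.card Θ - 1 : ℕ) * ∑ a, max (m a - π a) 0 := by
        rw [Finset.card_univ, Finset.sum_congr rfl (fun a _ => by rw [hdiv a])]

end Coupling


section PerType
variable {Θ X : Type*} [Fintype Θ] [Fintype X] [DecidableEq Θ]

lemma ubar_lift (u : X × Θ → ℝ) (x : Θ → X → ℝ) (ρ : Θ → ℝ) (θ : Θ) :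
    ubar u (liftSCF x ρ) θ = ∑ θ', ρ θ' * ubar u (x θ') θ := by
  simp only [ubar, liftSCF]
  calc ∑ a, (∑ θ', ρ θ' * x θ' a) * u (a, θ)
      = ∑ a, ∑ θ', ρ θ' * x θ' a * u (a, θ) :=
        Finset.sum_congr rfl (fun a _ => Finset.sum_mul _ _ _)
    _ = ∑ θ', ∑ a, ρ θ' * x θ' a * u (a, θ) := Finset.sum_comm
    _ = ∑ θ', ρ θ' * ∑ a, x θ' a * u (a, θ) := by
        refine Finset.sum_congr rfl (fun θ' _ => ?_)
        rw [Finset.mul_sum]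
        exact Finset.sum_congr rfl (fun a _ => by ring)

lemma tv_le_one {Z : Type*} [Fintype Z] (p q : Z → ℝ) (hp : IsProbVec p)
    (hq : IsProbVec q) : tv p q ≤ 1 := by
  have h : ∀ z, |p z - q z| ≤ p z + q z := by
    intro z
    calc |p z - q z| ≤ |p z| + |q z| := abs_sub _ _
      _ = p z + q z := by rw [abs_of_nonneg (hp.1 z), abs_of_nonneg (hq.1 z)]
  have : ∑ z, |p z - q z| ≤ ∑ z, (p z + q z) := Finset.sum_le_sum (fun z _ => h z)
  rw [Finset.sum_add_distrib, hp.2, hq.2] at this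
  rw [tv]
  linarith

lemma tv_lift_le (x : Θ → X → ℝ) (hx : ∀ θ, IsProbVec (x θ)) (ρ : Θ → ℝ)
    (hρ : IsProbVec ρ) (θ : Θ) : tv (liftSCF x ρ) (x θ) ≤ 1 - ρ θ := by
  have hstep : ∀ a, |liftSCF x ρ a - x θ a| ≤ ∑ θ', ρ θ' * |x θ' a - x θ a| := by
    intro a
    have h1 : liftSCF x ρ a - x θ a = ∑ θ', ρ θ' * (x θ' a - x θ a) := by
      simp only [liftSCF]
      rw [Finset.sum_congr rfl (fun θ' (_ : θ' ∈ univ) =>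
        (mul_sub (ρ θ') (x θ' a) (x θ a))), Finset.sum_sub_distrib, ← Finset.sum_mul, hρ.2,
        one_mul]
    rw [h1]
    calc |∑ θ', ρ θ' * (x θ' a - x θ a)| ≤ ∑ θ', |ρ θ' * (x θ' a - x θ a)| :=
        Finset.abs_sum_le_sum_abs _ _
      _ = ∑ θ', ρ θ' * |x θ' a - x θ a| := Finset.sum_congr rfl (fun θ' _ => by
          rw [abs_mul, abs_of_nonneg (hρ.1 θ')])
  have h2 : tv (liftSCF x ρ) (x θ) ≤ ∑ θ', ρ θ' * tv (x θ') (x θ) := by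
    rw [tv]
    have : ∑ a, |liftSCF x ρ a - x θ a| ≤ ∑ a, ∑ θ', ρ θ' * |x θ' a - x θ a| :=
      Finset.sum_le_sum (fun a _ => hstep a)
    rw [Finset.sum_comm] at this
    have heq : ∀ θ', ∑ a, ρ θ' * |x θ' a - x θ a| = ρ θ' * (2 * tv (x θ') (x θ)) := by
      intro θ'
      rw [← Finset.mul_sum, tv]
      congr 1
      field_simp
    rw [Finset.sum_congr rfl (fun θ' _ => heq θ')] at this
    have : ∑ a, |liftSCF x ρ a - x θ a| ≤ 2 * ∑ θ', ρ θ' * tv (x θ') (x θ) := by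
      rw [Finset.mul_sum]
      refine le_trans this (le_of_eq (Finset.sum_congr rfl (fun θ' _ => by ring)))
    linarith
  refine le_trans h2 ?_
  have h3 : ∀ θ', ρ θ' * tv (x θ') (x θ) ≤ ρ θ' - (if θ' = θ then ρ θ' else 0) := by
    intro θ'
    by_cases h : θ' = θ
    · subst h
      have : tv (x θ') (x θ') = 0 := by simp [tv]
      rw [this, if_pos rfl]
      simp
    · rw [if_neg h, sub_zero]
      calc ρ θ' * tv (x θ') (x θ) ≤ ρ θ' * 1 :=
          mul_le_mul_of_nonneg_left (tv_le_one _ _ (hx θ') (hx θ)) (hρ.1 θ')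
        _ = ρ θ' := mul_one _
  calc ∑ θ', ρ θ' * tv (x θ') (x θ) ≤ ∑ θ', (ρ θ' - (if θ' = θ then ρ θ' else 0)) :=
      Finset.sum_le_sum (fun θ' _ => h3 θ')
    _ = 1 - ρ θ := by
      rw [Finset.sum_sub_distrib, hρ.2, Finset.sum_ite_eq' univ θ ρ, if_pos (mem_univ θ)]

lemma per_type (u : X × Θ → ℝ) (x : Θ → X → ℝ) (hx : ∀ θ, IsProbVec (x θ))
    (hcm : CyclMonoSCF u x) (π : Θ → ℝ) (hπ : IsProbVec π)
    (K : ℕ) (hK : 1 ≤ K) (θv : Fin K → Θ) :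
    ∃ r : Fin K → Θ → ℝ, Feasible K π r ∧
      (∀ r', Feasible K π r' → payoff u x K θv r' ≤ payoff u x K θv r) ∧
      (∑ k, tv (liftSCF x (r k)) (x (θv k))) / K ≤
        (Fintype.card Θ - 1 : ℕ) * ((∑ θ, |marg K θv θ - π θ|) / 2) := by
  classical
  have hK0 : (0:ℝ) < K := by exact_mod_cast hK
  set m : Θ → ℝ := marg K θv with hmdef
  have hfib : ∀ (F : Θ → ℝ), ∑ k, F (θv k) =
      ∑ θ, ((univ.filter (fun k => θv k = θ)).card : ℝ) * F θ := by
    intro F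
    rw [← Finset.sum_fiberwise univ θv (fun k => F (θv k))]
    refine Finset.sum_congr rfl (fun θ _ => ?_)
    rw [Finset.sum_congr rfl (fun k hk => by rw [(Finset.mem_filter.mp hk).2]),
      Finset.sum_const, nsmul_eq_mul]
  have hcnt : ∀ θ, ((univ.filter (fun k => θv k = θ)).card : ℝ) = K * m θ := by
    intro θ
    rw [hmdef]
    simp only [marg]
    field_simp
  have hm : IsProbVec m := by
    constructor
    · intro θ; rw [hmdef]; simp only [marg]; positivity
    · have h1 := hfib (fun _ => (1:ℝ))
      simp only [mul_one, Finset.sum_const, nsmul_eq_mul, Finset.card_univ,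
        Fintype.card_fin] at h1
      have h2 : ∑ θ, m θ = (∑ θ, ((univ.filter (fun k => θv k = θ)).card : ℝ)) / K := by
        rw [Finset.sum_div]
        exact Finset.sum_congr rfl (fun θ _ => by rw [hcnt θ]; field_simp)
      rw [h2, ← h1]
      field_simp
  obtain ⟨γ, hγnn, hγrow, hγcol, hγmax, hγtr⟩ :=
    exists_opt_coupling u x hcm m π hm hπ
  have hγ0 : ∀ θ, m θ = 0 → ∀ b, γ θ b = 0 := by
    intro θ h b
    exact (Finset.sum_eq_zero_iff_of_nonneg (fun b _ => hγnn θ b)).mp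
      (by rw [hγrow θ, h]) b (mem_univ b)
  have hmpos : ∀ k, 0 < m (θv k) := by
    intro k
    rw [hmdef]
    simp only [marg]
    have : 0 < (univ.filter (fun k' => θv k' = θv k)).card :=
      Finset.card_pos.mpr ⟨k, Finset.mem_filter.mpr ⟨mem_univ k, rfl⟩⟩
    positivity
  set r : Fin K → Θ → ℝ := fun k b => γ (θv k) b / m (θv k) with hrdef
  have hkey : ∀ F : Θ → ℝ, (∀ θ, m θ = 0 → F θ = 0) →
      (∑ k, F (θv k) / m (θv k)) / K = ∑ θ, F θ := by
    intro F hF0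
    rw [hfib (fun θ => F θ / m θ), Finset.sum_div]
    refine Finset.sum_congr rfl (fun θ _ => ?_)
    by_cases h : m θ = 0
    · rw [hF0 θ h, h]; simp
    · rw [hcnt θ]; field_simp
  have hprob : ∀ k, IsProbVec (r k) := by
    intro k
    constructor
    · intro b; exact div_nonneg (hγnn _ b) (hmpos k).le
    · rw [hrdef]
      simp only
      rw [← Finset.sum_div, hγrow (θv k), div_self (hmpos k).ne']
  have hfeas : Feasible K π r := by
    refine ⟨hprob, fun b => ?_⟩
    have := hkey (fun θ => γ θ b) (fun θ h => hγ0 θ h b)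
    rw [hrdef]
    simp only
    rw [this, hγcol b]
  have hpay : payoff u x K θv r = ∑ a, ∑ b, γ a b * ubar u (x b) a := by
    simp only [payoff]
    rw [Finset.sum_congr rfl (fun k (_ : k ∈ univ) => ubar_lift u x (r k) (θv k))]
    have h1 : ∀ k, ∑ θ', r k θ' * ubar u (x θ') (θv k) =
        (∑ θ', γ (θv k) θ' * ubar u (x θ') (θv k)) / m (θv k) := by
      intro k
      rw [Finset.sum_div]
      exact Finset.sum_congr rfl (fun θ' _ => by rw [hrdef]; simp only; ring)
    rw [Finset.sum_congr rfl (fun k (_ : k ∈ univ) => h1 k)]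
    exact hkey (fun θ => ∑ θ', γ θ θ' * ubar u (x θ') θ)
      (fun θ h => Finset.sum_eq_zero (fun θ' _ => by rw [hγ0 θ h θ']; ring))
  have hbest : ∀ r', Feasible K π r' → payoff u x K θv r' ≤ payoff u x K θv r := by
    intro r' hr'
    set γ' : Θ → Θ → ℝ := fun a b => (∑ k, if θv k = a then r' k b else 0) / K with hγ'def
    have hγ'nn : ∀ a b, 0 ≤ γ' a b := by
      intro a b
      rw [hγ'def]
      simp only
      have : (0:ℝ) ≤ ∑ k, if θv k = a then r' k b else 0 :=
        Finset.sum_nonneg (fun k _ => by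
          by_cases h : θv k = a
          · rw [if_pos h]; exact (hr'.1 k).1 b
          · rw [if_neg h])
      positivity
    have hγ'row : ∀ a, ∑ b, γ' a b = m a := by
      intro a
      rw [hγ'def]
      simp only
      rw [← Finset.sum_div, Finset.sum_comm]
      have h1 : ∀ k, ∑ b, (if θv k = a then r' k b else 0) =
          (if θv k = a then (1:ℝ) else 0) := by
        intro k
        by_cases h : θv k = a
        · simp only [if_pos h]; exact (hr'.1 k).2
        · simp [if_neg h]
      rw [Finset.sum_congr rfl (fun k (_ : k ∈ univ) => h1 k), Finset.sum_boole, hmdef]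
      simp only [marg]
    have hγ'col : ∀ b, ∑ a, γ' a b = π b := by
      intro b
      rw [hγ'def]
      simp only
      rw [← Finset.sum_div, Finset.sum_comm]
      have h1 : ∀ k, ∑ a, (if θv k = a then r' k b else 0) = r' k b := by
        intro k
        rw [Finset.sum_ite_eq univ (θv k) (fun _ => r' k b), if_pos (mem_univ (θv k))]
      rw [Finset.sum_congr rfl (fun k (_ : k ∈ univ) => h1 k), hr'.2 b]
    have hpay' : payoff u x K θv r' = ∑ a, ∑ b, γ' a b * ubar u (x b) a := by
      simp only [payoff]
      rw [Finset.sum_congr rfl (fun k (_ : k ∈ univ) => ubar_lift u x (r' k) (θv k))]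
      have hRHS : ∀ a, ∑ b, γ' a b * ubar u (x b) a =
          ∑ b, ∑ k, (if θv k = a then r' k b * ubar u (x b) a / K else 0) := by
        intro a
        refine Finset.sum_congr rfl (fun b _ => ?_)
        rw [hγ'def]
        simp only
        rw [div_mul_eq_mul_div, Finset.sum_mul, Finset.sum_div]
        refine Finset.sum_congr rfl (fun k _ => ?_)
        by_cases h : θv k = a
        · rw [if_pos h, if_pos h]
        · rw [if_neg h, if_neg h, zero_mul, zero_div]
      have h2 : ∀ b, ∑ a, ∑ k, (if θv k = a then r' k b * ubar u (x b) a / K else 0) =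
          ∑ k, r' k b * ubar u (x b) (θv k) / K := by
        intro b
        rw [Finset.sum_comm]
        refine Finset.sum_congr rfl (fun k _ => ?_)
        rw [Finset.sum_ite_eq univ (θv k) (fun a => r' k b * ubar u (x b) a / K),
          if_pos (mem_univ (θv k))]
      have hchain : ∑ a, ∑ b, γ' a b * ubar u (x b) a =
          (∑ k, ∑ θ', r' k θ' * ubar u (x θ') (θv k)) / K := by
        calc ∑ a, ∑ b, γ' a b * ubar u (x b) a
            = ∑ a, ∑ b, ∑ k, (if θv k = a then r' k b * ubar u (x b) a / K else 0) :=
              Finset.sum_congr rfl (fun a _ => hRHS a)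
          _ = ∑ b, ∑ a, ∑ k, (if θv k = a then r' k b * ubar u (x b) a / K else 0) :=
              Finset.sum_comm
          _ = ∑ b, ∑ k, r' k b * ubar u (x b) (θv k) / K :=
              Finset.sum_congr rfl (fun b _ => h2 b)
          _ = ∑ k, ∑ b, r' k b * ubar u (x b) (θv k) / K := Finset.sum_comm
          _ = (∑ k, ∑ θ', r' k θ' * ubar u (x θ') (θv k)) / K := by
              rw [Finset.sum_div]
              exact Finset.sum_congr rfl (fun k _ => by rw [Finset.sum_div])
      rw [hchain]
    rw [hpay, hpay']
    exact hγmax γ' hγ'nn hγ'row hγ'col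
  have htr : (∑ k, r k (θv k)) / K = ∑ a, γ a a := by
    have := hkey (fun θ => γ θ θ) (fun θ h => hγ0 θ h θ)
    rw [hrdef]
    simp only
    exact this
  have herr : (∑ k, tv (liftSCF x (r k)) (x (θv k))) / K ≤ 1 - ∑ a, γ a a := by
    have h1 : ∀ k, tv (liftSCF x (r k)) (x (θv k)) ≤ 1 - r k (θv k) :=
      fun k => tv_lift_le x hx (r k) (hprob k) (θv k)
    have h2 : (∑ k, tv (liftSCF x (r k)) (x (θv k))) / K ≤
        (∑ k, (1 - r k (θv k))) / K := by
      gcongr with k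
      exact h1 k
    have h3 : (∑ k, (1 - r k (θv k))) / K = 1 - (∑ k, r k (θv k)) / K := by
      rw [Finset.sum_sub_distrib, Finset.sum_const, Finset.card_univ, Fintype.card_fin,
        nsmul_eq_mul, mul_one, sub_div]
      congr 1
      field_simp
    rw [h3, htr] at h2
    exact h2
  have hhalf : ∑ a, max (m a - π a) 0 = (∑ a, |m a - π a|) / 2 := by
    have h1 : ∀ a, max (m a - π a) 0 = ((m a - π a) + |m a - π a|) / 2 := by
      intro a
      rcases le_total (m a - π a) 0 with h | h
      · rw [max_eq_right h, abs_of_nonpos h]; ring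
      · rw [max_eq_left h, abs_of_nonneg h]; ring
    rw [Finset.sum_congr rfl (fun a _ => h1 a)]
    rw [← Finset.sum_div, Finset.sum_add_distrib, Finset.sum_sub_distrib, hm.2, hπ.2]
    ring
  refine ⟨r, hfeas, hbest, ?_⟩
  calc (∑ k, tv (liftSCF x (r k)) (x (θv k))) / K ≤ 1 - ∑ a, γ a a := herr
    _ ≤ (Fintype.card Θ - 1 : ℕ) * ∑ a, max (m a - π a) 0 := hγtr
    _ = (Fintype.card Θ - 1 : ℕ) * ((∑ θ, |marg K θv θ - π θ|) / 2) := by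
        rw [hhalf, hmdef]

end PerType

section Prob
variable {Θ : Type*} [Fintype Θ] [DecidableEq Θ]

lemma master_prod (K : ℕ) (G : Fin K → Θ → ℝ) :
    ∑ θv : Fin K → Θ, ∏ k, G k (θv k) = ∏ k, ∑ θ, G k θ := by
  rw [Finset.prod_univ_sum (fun _ => (univ : Finset Θ)) G, Fintype.piFinset_univ]

lemma exp_coord (K : ℕ) (π : Θ → ℝ) (hπ1 : ∑ θ, π θ = 1) (k : Fin K) (g : Θ → ℝ) :
    ∑ θv : Fin K → Θ, (∏ k', π (θv k')) * g (θv k) = ∑ θ, π θ * g θ := by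
  have h1 : ∀ θv : Fin K → Θ, (∏ k', π (θv k')) * g (θv k)
      = ∏ k', (π (θv k') * (if k' = k then g (θv k') else 1)) := by
    intro θv
    rw [Finset.prod_mul_distrib, Finset.prod_ite_eq' univ k (fun k' => g (θv k')),
      if_pos (mem_univ k)]
  rw [Finset.sum_congr rfl (fun θv _ => h1 θv),
    master_prod K (fun k' θ => π θ * (if k' = k then g θ else 1))]
  have h2 : ∀ k' : Fin K, (∑ θ, π θ * (if k' = k then g θ else 1)) =
      (if k' = k then ∑ θ, π θ * g θ else 1) := by
    intro k'
    by_cases h : k' = k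
    · simp [h]
    · simp [h, hπ1]
  rw [Finset.prod_congr rfl (fun k' _ => h2 k'),
    Finset.prod_ite_eq' univ k (fun _ => ∑ θ, π θ * g θ), if_pos (mem_univ k)]

lemma exp_coord2 (K : ℕ) (π : Θ → ℝ) (hπ1 : ∑ θ, π θ = 1) (k l : Fin K) (hkl : k ≠ l)
    (g h : Θ → ℝ) :
    ∑ θv : Fin K → Θ, (∏ k', π (θv k')) * (g (θv k) * h (θv l)) =
      (∑ θ, π θ * g θ) * (∑ θ, π θ * h θ) := by
  have h1 : ∀ θv : Fin K → Θ, (∏ k', π (θv k')) * (g (θv k) * h (θv l))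
      = ∏ k', (π (θv k') * ((if k' = k then g (θv k') else 1) *
          (if k' = l then h (θv k') else 1))) := by
    intro θv
    rw [Finset.prod_mul_distrib, Finset.prod_mul_distrib,
      Finset.prod_ite_eq' univ k (fun k' => g (θv k')), if_pos (mem_univ k),
      Finset.prod_ite_eq' univ l (fun k' => h (θv k')), if_pos (mem_univ l)]
  rw [Finset.sum_congr rfl (fun θv _ => h1 θv),
    master_prod K (fun k' θ => π θ * ((if k' = k then g θ else 1) *
      (if k' = l then h θ else 1)))]
  have h2 : ∀ k' : Fin K, (∑ θ, π θ * ((if k' = k then g θ else 1) *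
      (if k' = l then h θ else 1))) =
      ((if k' = k then ∑ θ, π θ * g θ else 1) * (if k' = l then ∑ θ, π θ * h θ else 1)) := by
    intro k'
    by_cases h' : k' = k
    · simp [h', hkl]
    · by_cases h'' : k' = l
      · simp [h', h'', Ne.symm hkl]
      · simp [h', h'', hπ1]
  rw [Finset.prod_congr rfl (fun k' _ => h2 k'), Finset.prod_mul_distrib,
    Finset.prod_ite_eq' univ k (fun _ => ∑ θ, π θ * g θ), if_pos (mem_univ k),
    Finset.prod_ite_eq' univ l (fun _ => ∑ θ, π θ * h θ), if_pos (mem_univ l)]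

lemma exp_abs_marg_le (π : Θ → ℝ) (hπ : IsProbVec π) (K : ℕ) (hK : 1 ≤ K) (θ : Θ) :
    ∑ θv : Fin K → Θ, (∏ k, π (θv k)) * |marg K θv θ - π θ| ≤
      Real.sqrt (π θ * (1 - π θ)) / Real.sqrt K := by
  classical
  have hK0 : (0:ℝ) < K := by exact_mod_cast hK
  set p : ℝ := π θ with hp
  have hp0 : 0 ≤ p := hπ.1 θ
  have hp1 : p ≤ 1 := by
    rw [hp, ← hπ.2]
    exact Finset.single_le_sum (fun θ' _ => hπ.1 θ') (mem_univ θ)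
  set χ : Θ → ℝ := fun t => if t = θ then 1 else 0 with hχ
  have hπχ : ∑ θ', π θ' * χ θ' = p := by
    rw [hχ]
    simp only [mul_ite, mul_one, mul_zero]
    rw [Finset.sum_ite_eq' univ θ π, if_pos (mem_univ θ)]
  have hπc : ∑ θ', π θ' * (χ θ' - p) = 0 := by
    rw [Finset.sum_congr rfl (fun θ' (_ : θ' ∈ univ) => mul_sub (π θ') (χ θ') p),
      Finset.sum_sub_distrib, hπχ, ← Finset.sum_mul, hπ.2]
    ring
  have hw : ∀ θv : Fin K → Θ, (0:ℝ) ≤ ∏ k, π (θv k) :=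
    fun θv => Finset.prod_nonneg (fun k _ => hπ.1 _)
  have hw1 : ∑ θv : Fin K → Θ, ∏ k, π (θv k) = 1 := by
    rw [master_prod K (fun _ => π)]
    simp [hπ.2]
  have hmarg : ∀ θv : Fin K → Θ, marg K θv θ - p = (∑ k, (χ (θv k) - p)) / K := by
    intro θv
    have hb : ∑ k, (if θv k = θ then (1:ℝ) else 0) =
        ((univ.filter (fun k => θv k = θ)).card : ℝ) := by
      rw [Finset.sum_boole]
    rw [Finset.sum_sub_distrib]
    simp only [marg, hχ]
    rw [hb, Finset.sum_const, Finset.card_univ, Fintype.card_fin, nsmul_eq_mul]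
    field_simp
  -- second moment
  have hVterm : ∑ θ', π θ' * (χ θ' - p) ^ 2 = p * (1 - p) := by
    have h1 : ∀ θ', π θ' * (χ θ' - p) ^ 2
        = (π θ' * χ θ') * (1 - 2 * p) + π θ' * p ^ 2 := by
      intro θ'
      rw [hχ]
      by_cases h : θ' = θ <;> simp [h] <;> ring
    rw [Finset.sum_congr rfl (fun θ' _ => h1 θ'), Finset.sum_add_distrib,
      ← Finset.sum_mul, hπχ, ← Finset.sum_mul, hπ.2]
    ring
  have hvar : ∑ θv : Fin K → Θ, (∏ k, π (θv k)) * (marg K θv θ - p) ^ 2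
      = p * (1 - p) / K := by
    have hsq : ∀ θv : Fin K → Θ, (marg K θv θ - p) ^ 2 =
        (∑ k, ∑ l, (χ (θv k) - p) * (χ (θv l) - p)) / K ^ 2 := by
      intro θv
      rw [hmarg θv, div_pow, ← Finset.sum_mul_sum]
      ring
    have hswap : ∑ θv : Fin K → Θ, (∏ k, π (θv k)) *
        (∑ k, ∑ l, (χ (θv k) - p) * (χ (θv l) - p))
        = ∑ k, ∑ l : Fin K, ∑ θv : Fin K → Θ, (∏ k', π (θv k')) *
            ((χ (θv k) - p) * (χ (θv l) - p)) := by
      rw [Finset.sum_congr rfl (fun θv (_ : θv ∈ univ) => Finset.mul_sum univ _ _),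
        Finset.sum_comm]
      refine Finset.sum_congr rfl (fun k _ => ?_)
      rw [Finset.sum_congr rfl (fun θv (_ : θv ∈ univ) => Finset.mul_sum univ _ _),
        Finset.sum_comm]
    have hterm : ∀ k l : Fin K, ∑ θv : Fin K → Θ, (∏ k', π (θv k')) *
        ((χ (θv k) - p) * (χ (θv l) - p)) = if k = l then p * (1 - p) else 0 := by
      intro k l
      by_cases h : k = l
      · subst h
        rw [if_pos rfl]
        have : ∀ θv : Fin K → Θ, (∏ k', π (θv k')) * ((χ (θv k) - p) * (χ (θv k) - p))
            = (∏ k', π (θv k')) * ((fun t => (χ t - p) ^ 2) (θv k)) := by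
          intro θv; simp only; ring
        rw [Finset.sum_congr rfl (fun θv _ => this θv),
          exp_coord K π hπ.2 k (fun t => (χ t - p) ^ 2), hVterm]
      · rw [if_neg h, exp_coord2 K π hπ.2 k l h (fun t => χ t - p) (fun t => χ t - p),
          hπc]
        ring
    calc ∑ θv : Fin K → Θ, (∏ k, π (θv k)) * (marg K θv θ - p) ^ 2
        = ∑ θv : Fin K → Θ, ((∏ k, π (θv k)) *
            (∑ k, ∑ l, (χ (θv k) - p) * (χ (θv l) - p))) / K ^ 2 := by
          refine Finset.sum_congr rfl (fun θv _ => ?_)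
          rw [hsq θv]
          ring
      _ = (∑ k : Fin K, ∑ l : Fin K, ∑ θv : Fin K → Θ, (∏ k', π (θv k')) *
            ((χ (θv k) - p) * (χ (θv l) - p))) / K ^ 2 := by
          rw [← Finset.sum_div, hswap]
      _ = (∑ k : Fin K, ∑ l : Fin K, if k = l then p * (1 - p) else 0) / K ^ 2 := by
          rw [Finset.sum_congr rfl (fun k (_ : k ∈ univ) =>
            Finset.sum_congr rfl (fun l _ => hterm k l))]
      _ = p * (1 - p) / K := by
          rw [Finset.sum_congr rfl (fun k (_ : k ∈ univ) =>
            Finset.sum_ite_eq univ k (fun _ => p * (1 - p)))]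
          simp only [if_pos (mem_univ _), Finset.sum_const, Finset.card_univ,
            Fintype.card_fin, nsmul_eq_mul]
          field_simp
  -- Cauchy–Schwarz
  set E : ℝ := ∑ θv : Fin K → Θ, (∏ k, π (θv k)) * |marg K θv θ - π θ| with hE
  have hE0 : 0 ≤ E :=
    Finset.sum_nonneg (fun θv _ => mul_nonneg (hw θv) (abs_nonneg _))
  have hCS : E ^ 2 ≤ p * (1 - p) / K := by
    have := Finset.sum_mul_sq_le_sq_mul_sq univ
      (fun θv : Fin K → Θ => Real.sqrt (∏ k, π (θv k)))
      (fun θv : Fin K → Θ => Real.sqrt (∏ k, π (θv k)) * |marg K θv θ - π θ|)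
    have e1 : ∀ θv : Fin K → Θ, Real.sqrt (∏ k, π (θv k)) *
        (Real.sqrt (∏ k, π (θv k)) * |marg K θv θ - π θ|)
        = (∏ k, π (θv k)) * |marg K θv θ - π θ| := by
      intro θv
      rw [← mul_assoc, Real.mul_self_sqrt (hw θv)]
    have e2 : ∀ θv : Fin K → Θ, Real.sqrt (∏ k, π (θv k)) ^ 2 = ∏ k, π (θv k) :=
      fun θv => Real.sq_sqrt (hw θv)
    have e3 : ∀ θv : Fin K → Θ, (Real.sqrt (∏ k, π (θv k)) * |marg K θv θ - π θ|) ^ 2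
        = (∏ k, π (θv k)) * (marg K θv θ - p) ^ 2 := by
      intro θv
      rw [mul_pow, Real.sq_sqrt (hw θv), sq_abs, hp]
    rw [Finset.sum_congr rfl (fun θv _ => e1 θv),
      Finset.sum_congr rfl (fun θv _ => e2 θv),
      Finset.sum_congr rfl (fun θv _ => e3 θv), hw1, one_mul, hvar] at this
    exact this
  have hrhs : Real.sqrt (p * (1 - p) / K) = Real.sqrt (π θ * (1 - π θ)) / Real.sqrt K := by
    rw [Real.sqrt_div (by nlinarith : (0:ℝ) ≤ p * (1 - p)) K, hp]
  rw [← hrhs]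
  have hy : (0:ℝ) ≤ p * (1 - p) / K := div_nonneg (by nlinarith) hK0.le
  nlinarith [Real.sq_sqrt hy, Real.sqrt_nonneg (p * (1 - p) / K),
    sq_nonneg (E - Real.sqrt (p * (1 - p) / K))]

lemma sum_sqrt_le [Nonempty Θ] (π : Θ → ℝ) (hπ : IsProbVec π) :
    ∑ θ, Real.sqrt (π θ * (1 - π θ)) ≤ Real.sqrt ((Fintype.card Θ : ℝ) - 1) := by
  classical
  set n : ℝ := (Fintype.card Θ : ℝ) with hn
  have hn1 : 1 ≤ n := by
    rw [hn]
    exact_mod_cast Fintype.card_pos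
  have hn0 : 0 < n := by linarith
  have hple : ∀ θ, π θ ≤ 1 := by
    intro θ
    rw [← hπ.2]
    exact Finset.single_le_sum (fun θ' _ => hπ.1 θ') (mem_univ θ)
  have h1 : 1 ≤ (∑ θ, π θ ^ 2) * n := by
    have hcs := Finset.sum_mul_sq_le_sq_mul_sq univ π (fun _ => (1:ℝ))
    calc (1:ℝ) = (∑ θ, π θ * 1) ^ 2 := by
          rw [Finset.sum_congr rfl (fun θ (_ : θ ∈ univ) => mul_one (π θ)), hπ.2]
          norm_num
      _ ≤ (∑ θ, π θ ^ 2) * (∑ _θ : Θ, (1:ℝ) ^ 2) := hcs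
      _ = (∑ θ, π θ ^ 2) * n := by
          rw [hn]
          simp
  have h2 : ∑ θ, π θ * (1 - π θ) ≤ (n - 1) / n := by
    have : ∑ θ, π θ * (1 - π θ) = 1 - ∑ θ, π θ ^ 2 := by
      have he : ∀ θ, π θ * (1 - π θ) = π θ - π θ ^ 2 := fun θ => by ring
      rw [Finset.sum_congr rfl (fun θ (_ : θ ∈ univ) => he θ), Finset.sum_sub_distrib,
        hπ.2]
    rw [this]
    have hs2 : 1 / n ≤ ∑ θ, π θ ^ 2 := by
      rw [div_le_iff₀ hn0]
      linarith
    have he : (n - 1) / n = 1 - 1 / n := by field_simp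
    rw [he]
    linarith
  have h3 : (∑ θ, Real.sqrt (π θ * (1 - π θ))) ^ 2 ≤ n - 1 := by
    have hcs := Finset.sum_mul_sq_le_sq_mul_sq univ (fun _ => (1:ℝ))
      (fun θ => Real.sqrt (π θ * (1 - π θ)))
    simp only [one_mul, one_pow, Finset.sum_const, Finset.card_univ, nsmul_eq_mul,
      mul_one] at hcs
    have hsq : ∀ θ, Real.sqrt (π θ * (1 - π θ)) ^ 2 = π θ * (1 - π θ) := by
      intro θ
      exact Real.sq_sqrt (by nlinarith [hπ.1 θ, hple θ])
    rw [Finset.sum_congr rfl (fun θ _ => hsq θ)] at hcs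
    calc (∑ θ, Real.sqrt (π θ * (1 - π θ))) ^ 2
        ≤ (Fintype.card Θ : ℝ) * ∑ θ, π θ * (1 - π θ) := hcs
      _ = n * ∑ θ, π θ * (1 - π θ) := by rw [hn]
      _ ≤ n * ((n - 1) / n) := mul_le_mul_of_nonneg_left h2 hn0.le
      _ = n - 1 := by field_simp
  have h4 : 0 ≤ ∑ θ, Real.sqrt (π θ * (1 - π θ)) :=
    Finset.sum_nonneg (fun θ _ => Real.sqrt_nonneg _)
  nlinarith [Real.sq_sqrt (by linarith : (0:ℝ) ≤ n - 1),
    Real.sqrt_nonneg (n - 1), sq_nonneg (∑ θ, Real.sqrt (π θ * (1 - π θ)) - Real.sqrt (n - 1))]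

end Prob

/-- Expected error bound. If `x` is cyclically monotone,
there is a best-response strategy `σ` for the quota mechanism with quota `π`
whose expected average decision error under i.i.d. draws from `π` is at most
`(1/(2√K))·(|Θ| − 1)^{3/2}`. -/
theorem quota_expected_error_bound {Θ X : Type*} [Fintype Θ] [Fintype X]
    [Nonempty Θ] [Nonempty X] [DecidableEq Θ]
    (u : X × Θ → ℝ) (x : Θ → X → ℝ) (hx : ∀ θ, IsProbVec (x θ))
    (hcm : CyclMonoSCF u x)
    (π : Θ → ℝ) (hπ : IsProbVec π) (K : ℕ) (hK : 1 ≤ K) :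
    ∃ σ : (Fin K → Θ) → (Fin K → Θ → ℝ),
      (∀ θv : Fin K → Θ, Feasible K π (σ θv) ∧
        ∀ r' : Fin K → Θ → ℝ, Feasible K π r' →
          payoff u x K θv r' ≤ payoff u x K θv (σ θv)) ∧
      ∑ θv : Fin K → Θ, (∏ k, π (θv k)) *
          ((∑ k, tv (liftSCF x (σ θv k)) (x (θv k))) / K) ≤
        (1 / (2 * Real.sqrt K)) * ((Fintype.card Θ : ℝ) - 1) ^ ((3 : ℝ) / 2) := by
  classical
  choose σ hfeas hbest herr using fun θv => per_type u x hx hcm π hπ K hK θv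
  refine ⟨σ, fun θv => ⟨hfeas θv, hbest θv⟩, ?_⟩
  set n : ℝ := (Fintype.card Θ : ℝ) with hn
  have hcard1 : 1 ≤ Fintype.card Θ := Fintype.card_pos
  have hn1 : (1:ℝ) ≤ n := by rw [hn]; exact_mod_cast hcard1
  have hcast : ((Fintype.card Θ - 1 : ℕ) : ℝ) = n - 1 := by
    rw [hn, Nat.cast_sub hcard1]
    norm_num
  have hw : ∀ θv : Fin K → Θ, (0:ℝ) ≤ ∏ k, π (θv k) :=
    fun θv => Finset.prod_nonneg (fun k _ => hπ.1 _)
  have hsqK : (0:ℝ) < Real.sqrt K := Real.sqrt_pos.mpr (by exact_mod_cast hK)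
  have hx32 : (n - 1) ^ ((3:ℝ)/2) = (n - 1) * Real.sqrt (n - 1) := by
    have h0 : (0:ℝ) ≤ n - 1 := by linarith
    rw [show (3:ℝ)/2 = 1 + 1/2 by norm_num, Real.rpow_add' h0 (by norm_num), Real.rpow_one,
      ← Real.sqrt_eq_rpow]
  calc ∑ θv : Fin K → Θ, (∏ k, π (θv k)) *
          ((∑ k, tv (liftSCF x (σ θv k)) (x (θv k))) / K)
      ≤ ∑ θv : Fin K → Θ, (∏ k, π (θv k)) *
          ((n - 1) * ((∑ θ, |marg K θv θ - π θ|) / 2)) := by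
        refine Finset.sum_le_sum (fun θv _ => mul_le_mul_of_nonneg_left ?_ (hw θv))
        have := herr θv
        rwa [hcast] at this
    _ = (n - 1) / 2 * ∑ θ, ∑ θv : Fin K → Θ, (∏ k, π (θv k)) * |marg K θv θ - π θ| := by
        have h1 : ∀ θv : Fin K → Θ, (∏ k, π (θv k)) *
            ((n - 1) * ((∑ θ, |marg K θv θ - π θ|) / 2))
            = ∑ θ, (n - 1) / 2 * ((∏ k, π (θv k)) * |marg K θv θ - π θ|) := by
          intro θv
          rw [← Finset.mul_sum, ← Finset.mul_sum]
          ring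
        rw [Finset.sum_congr rfl (fun θv _ => h1 θv), Finset.sum_comm, Finset.mul_sum]
        exact Finset.sum_congr rfl (fun θ _ =>
          (Finset.mul_sum univ (fun θv : Fin K → Θ =>
            (∏ k, π (θv k)) * |marg K θv θ - π θ|) ((n - 1) / 2)).symm)
    _ ≤ (n - 1) / 2 * ∑ θ, Real.sqrt (π θ * (1 - π θ)) / Real.sqrt K := by
        refine mul_le_mul_of_nonneg_left
          (Finset.sum_le_sum (fun θ _ => exp_abs_marg_le π hπ K hK θ)) (by linarith)
    _ = (n - 1) / (2 * Real.sqrt K) * ∑ θ, Real.sqrt (π θ * (1 - π θ)) := by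
        rw [← Finset.sum_div]
        field_simp
    _ ≤ (n - 1) / (2 * Real.sqrt K) * Real.sqrt (n - 1) := by
        refine mul_le_mul_of_nonneg_left (sum_sqrt_le π hπ) ?_
        exact div_nonneg (by linarith) (by positivity)
    _ = (1 / (2 * Real.sqrt K)) * ((n - 1) * Real.sqrt (n - 1)) := by ring
    _ = (1 / (2 * Real.sqrt K)) * (n - 1) ^ ((3:ℝ)/2) := by rw [hx32]
end

section
/- Fix an integer m ≥ 2 and an integer K ≥ m. Let Θ = {1,…,m}, X = {1,…,m}, and define u : X × Θ → ℝ by u(p,ℓ) = −(m−1) if p < ℓ, 0 if p = ℓ, and 1 if p > ℓ. Let x : Θ → Δ(X) be the deterministic social choice function x(ℓ) = δ_ℓ, and let q ∈ Δ(Θ) assign probability 1/K to each of 1,…,m−1 and probability (K−m+1)/K to m. Then: (a) x is cyclically monotone; and (b) for every ε > 0 there is NO map f : Θ^K → Δ(X)^K that is incentive compatible — meaning (1/K)·Σ_k ū(f(θ)^k, θ^k) ≥ (1/K)·Σ_k ū(f(θ')^k, θ^k) for all θ, θ' ∈ Θ^K — and satisfies (1/K)·Σ_{k=1}^K ‖f(θ)^k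 − δ_{θ^k}‖ ≤ (m − 1 − ε)·‖q − marg θ‖ for every θ ∈ Θ^K. -/
open Finset

/-- Point mass at `a`. -/
noncomputable def delta {X : Type*} [DecidableEq X] (a : X) : X → ℝ :=
  fun a' => if a' = a then 1 else 0

/-- The utility of the tightness example: `u(p,ℓ) = −(m−1)` if `p < ℓ`, `0` if
`p = ℓ`, and `1` if `p > ℓ`. -/
noncomputable def uEx (m : ℕ) : Fin m × Fin m → ℝ :=
  fun aθ => if aθ.1 < aθ.2 then -((m : ℝ) - 1) else if aθ.1 = aθ.2 then 0 else 1

/-- The quota of the tightness example: probability `1/K` on each of the first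
`m − 1` types and `(K − m + 1)/K` on the last type. -/
noncomputable def qEx (m K : ℕ) : Fin m → ℝ :=
  fun i => if (i : ℕ) = m - 1 then ((K : ℝ) - m + 1) / K else 1 / K

/- ### Auxiliary lemmas -/

lemma ubar_delta' {Θ X : Type*} [Fintype X] [DecidableEq X]
    (u : X × Θ → ℝ) (a : X) (θ : Θ) : ubar u (delta a) θ = u (a, θ) := by
  simp [ubar, delta, ite_mul]

lemma tv_nonneg' {Z : Type*} [Fintype Z] (p q : Z → ℝ) : 0 ≤ tv p q := by
  unfold tv; positivity

lemma eq_of_tv_eq_zero' {Z : Type*} [Fintype Z] {p q : Z → ℝ} (h : tv p q = 0) : p = q := by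
  unfold tv at h
  have h2 : ∑ z, |p z - q z| = 0 := by linarith
  funext z
  have := (Finset.sum_eq_zero_iff_of_nonneg (fun z _ => abs_nonneg _)).mp h2 z (mem_univ z)
  have := abs_eq_zero.mp this
  linarith

lemma uEx_le_one' (m : ℕ) (a θ : Fin m) : uEx m (a, θ) ≤ 1 := by
  have : (0:ℝ) ≤ m := Nat.cast_nonneg m
  unfold uEx; dsimp only; split_ifs <;> linarith

lemma uEx_self' (m : ℕ) (a : Fin m) : uEx m (a, a) = 0 := by
  simp [uEx]

lemma uEx_gt' (m : ℕ) {a θ : Fin m} (h : θ < a) : uEx m (a, θ) = 1 := by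
  simp [uEx, not_lt_of_gt h, ne_of_gt h, (ne_of_gt h : a ≠ θ)]

lemma tv_delta' {Z : Type*} [Fintype Z] [DecidableEq Z] {μ : Z → ℝ}
    (h0 : ∀ z, 0 ≤ μ z) (h1 : ∑ z, μ z = 1) (θ : Z) : tv μ (delta θ) = 1 - μ θ := by
  unfold tv delta
  rw [← Finset.add_sum_erase _ _ (mem_univ θ)]
  have he : ∑ z ∈ univ.erase θ, |μ z - if z = θ then (1:ℝ) else 0|
      = ∑ z ∈ univ.erase θ, μ z := by
    apply Finset.sum_congr rfl
    intro z hz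
    rw [if_neg (Finset.ne_of_mem_erase hz), sub_zero, abs_of_nonneg (h0 z)]
  have hs : ∑ z ∈ univ.erase θ, μ z = 1 - μ θ := by
    have := Finset.add_sum_erase _ μ (mem_univ θ)
    linarith [h1 ▸ this]
  rw [he, hs, if_pos rfl]
  have : |μ θ - 1| = 1 - μ θ := by
    rw [abs_of_nonpos (by nlinarith [h0 θ, hs, Finset.sum_nonneg (fun z _ => h0 z) (s := univ.erase θ)])]
    ring
  rw [this]; ring

lemma ubar_le_tv' {m : ℕ} {μ : Fin m → ℝ}
    (h0 : ∀ z, 0 ≤ μ z) (h1 : ∑ z, μ z = 1) (θ : Fin m) :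
    ubar (uEx m) μ θ ≤ tv μ (delta θ) := by
  rw [tv_delta' h0 h1]
  unfold ubar
  rw [← Finset.add_sum_erase _ _ (mem_univ θ), uEx_self', mul_zero, zero_add]
  have hs : ∑ z ∈ univ.erase θ, μ z = 1 - μ θ := by
    have := Finset.add_sum_erase _ μ (mem_univ θ)
    linarith [h1 ▸ this]
  calc ∑ a ∈ univ.erase θ, μ a * uEx m (a, θ)
      ≤ ∑ a ∈ univ.erase θ, μ a := by
        apply Finset.sum_le_sum
        intro a _
        nlinarith [uEx_le_one' m a θ, h0 a]
    _ = 1 - μ θ := hs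

lemma partA' (m : ℕ) (hm : 2 ≤ m) : CyclMonoSCF (uEx m) (fun ℓ : Fin m => delta ℓ) := by
  intro J θs hinj
  simp only [ubar_delta']
  have hrhs : ∑ j, uEx m (θs j, θs j) = 0 := by
    simp [uEx_self']
  rw [hrhs]
  have hnm : J + 2 ≤ m := by
    have := Fintype.card_le_of_injective θs hinj
    simpa using this
  have hne : ∀ j : Fin (J + 2), θs (j + 1) ≠ θs j := by
    intro j h
    have h2 := hinj h
    rw [Fin.ext_iff, Fin.val_add_one] at h2
    split at h2 <;> [skip; omega]
    rename_i hh
    rw [hh] at h2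
    simp [Fin.last] at h2
  set D := univ.filter (fun j : Fin (J + 2) => θs (j + 1) < θs j) with hD
  have hd1 : 1 ≤ D.card := by
    obtain ⟨j₀, -, hmax⟩ := Finset.exists_max_image univ θs univ_nonempty
    have hlt : θs (j₀ + 1) < θs j₀ := lt_of_le_of_ne (hmax _ (mem_univ _)) (hne j₀)
    exact Finset.card_pos.mpr ⟨j₀, Finset.mem_filter.mpr ⟨mem_univ _, hlt⟩⟩
  have hcards : D.card
      + (univ.filter (fun j : Fin (J + 2) => ¬ θs (j + 1) < θs j)).card = J + 2 := by
    rw [hD, Finset.card_filter_add_card_filter_not]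
    simp
  rw [← Finset.sum_filter_add_sum_filter_not univ (fun j => θs (j + 1) < θs j)]
  have hS1 : ∑ j ∈ D, uEx m (θs (j + 1), θs j) = D.card * (-((m:ℝ) - 1)) := by
    rw [Finset.sum_congr rfl (fun j hj => ?_), Finset.sum_const, nsmul_eq_mul]
    exact if_pos (Finset.mem_filter.mp hj).2
  have hS2 : ∑ j ∈ univ.filter (fun j : Fin (J + 2) => ¬ θs (j + 1) < θs j),
      uEx m (θs (j + 1), θs j) =
      ((univ.filter (fun j : Fin (J + 2) => ¬ θs (j + 1) < θs j)).card : ℝ) := by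
    rw [Finset.sum_congr rfl (fun j hj => ?_), Finset.sum_const, nsmul_eq_mul, mul_one]
    have hnlt := (Finset.mem_filter.mp hj).2
    unfold uEx
    rw [if_neg hnlt, if_neg (hne j)]
  rw [hS1, hS2]
  have hm' : (1:ℝ) ≤ (D.card : ℝ) := by exact_mod_cast hd1
  have hn' : (D.card : ℝ)
      + ((univ.filter (fun j : Fin (J + 2) => ¬ θs (j + 1) < θs j)).card : ℝ) = (J:ℝ) + 2 := by
    exact_mod_cast hcards
  have hnm' : (J:ℝ) + 2 ≤ (m:ℝ) := by exact_mod_cast hnm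
  nlinarith [hm', hn', hnm']

lemma card_filter_fin' (K : ℕ) (P : ℕ → Prop) [DecidablePred P] :
    ((univ : Finset (Fin K)).filter fun k : Fin K => P (k : ℕ)).card
      = ((Finset.range K).filter P).card := by
  rw [← Finset.card_map Fin.valEmbedding]
  congr 1
  ext n
  simp only [Finset.mem_map, Finset.mem_filter, Finset.mem_univ, true_and,
    Fin.valEmbedding_apply, Finset.mem_range]
  constructor
  · rintro ⟨k, hk, rfl⟩; exact ⟨k.isLt, hk⟩
  · rintro ⟨h1, h2⟩; exact ⟨⟨n, h1⟩, h2, rfl⟩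

def thStar (m K : ℕ) (hm : 2 ≤ m) : Fin K → Fin m :=
  fun k => ⟨min (k : ℕ) (m - 1), by omega⟩

def tauV (m K : ℕ) (hm : 2 ≤ m) : Fin K → Fin m :=
  fun k => ⟨min (k : ℕ) m - 1, by omega⟩

lemma count_thStar (m K : ℕ) (hm : 2 ≤ m) (hK : m ≤ K) (i : Fin m) :
    ((univ : Finset (Fin K)).filter fun k : Fin K => thStar m K hm k = i).card
      = if (i : ℕ) = m - 1 then K - (m - 1) else 1 := by
  have h1 : ((univ : Finset (Fin K)).filter fun k : Fin K => thStar m K hm k = i)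
      = (univ : Finset (Fin K)).filter fun k : Fin K => min (k : ℕ) (m - 1) = (i : ℕ) := by
    ext k; simp [thStar, Fin.ext_iff]
  rw [h1, card_filter_fin' K (fun n => min n (m - 1) = (i : ℕ))]
  by_cases hi : (i : ℕ) = m - 1
  · rw [if_pos hi]
    have h2 : (Finset.range K).filter (fun n => min n (m - 1) = (i : ℕ))
        = Finset.Ico (m - 1) K := by
      ext n; simp [Finset.mem_Ico]; omega
    rw [h2, Nat.card_Ico]
  · rw [if_neg hi]
    have hilt : (i : ℕ) < m - 1 := by have := i.isLt; omega
    have h2 : (Finset.range K).filter (fun n => min n (m - 1) = (i : ℕ)) = {(i : ℕ)} := by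
      ext n; simp; omega
    rw [h2, Finset.card_singleton]

lemma count_tau (m K : ℕ) (hm : 2 ≤ m) (hK : m ≤ K) (i : Fin m) :
    ((univ : Finset (Fin K)).filter fun k : Fin K => tauV m K hm k = i).card
      = if (i : ℕ) = 0 then 2 else if (i : ℕ) = m - 1 then K - m else 1 := by
  have h1 : ((univ : Finset (Fin K)).filter fun k : Fin K => tauV m K hm k = i)
      = (univ : Finset (Fin K)).filter fun k : Fin K => min (k : ℕ) m - 1 = (i : ℕ) := by
    ext k; simp [tauV, Fin.ext_iff]
  rw [h1, card_filter_fin' K (fun n => min n m - 1 = (i : ℕ))]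
  by_cases hi0 : (i : ℕ) = 0
  · rw [if_pos hi0]
    have h2 : (Finset.range K).filter (fun n => min n m - 1 = (i : ℕ)) = {0, 1} := by
      ext n; simp; omega
    rw [h2, Finset.card_insert_of_notMem (by simp), Finset.card_singleton]
  · rw [if_neg hi0]
    by_cases hi : (i : ℕ) = m - 1
    · rw [if_pos hi]
      have h2 : (Finset.range K).filter (fun n => min n m - 1 = (i : ℕ))
          = Finset.Ico m K := by
        ext n; simp [Finset.mem_Ico]; omega
      rw [h2, Nat.card_Ico]
    · rw [if_neg hi]
      have hilt : (i : ℕ) < m - 1 := by have := i.isLt; omega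
      have h2 : (Finset.range K).filter (fun n => min n m - 1 = (i : ℕ))
          = {(i : ℕ) + 1} := by
        ext n; simp; omega
      rw [h2, Finset.card_singleton]

lemma marg_thStar (m K : ℕ) (hm : 2 ≤ m) (hK : m ≤ K) :
    marg K (thStar m K hm) = qEx m K := by
  funext i
  unfold marg qEx
  rw [count_thStar m K hm hK]
  by_cases hi : (i : ℕ) = m - 1
  · rw [if_pos hi, if_pos hi]
    congr 1
    rw [Nat.cast_sub (by omega), Nat.cast_sub (by omega), Nat.cast_one]
    ring
  · rw [if_neg hi, if_neg hi, Nat.cast_one]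

lemma tv_qEx_marg_tau (m K : ℕ) (hm : 2 ≤ m) (hK : m ≤ K) :
    tv (qEx m K) (marg K (tauV m K hm)) = 1 / K := by
  have hK0 : (0:ℝ) < K := by exact_mod_cast (by omega : 0 < K)
  unfold tv
  have hsummand : ∀ i : Fin m, |qEx m K i - marg K (tauV m K hm) i| =
      (if i = (⟨0, by omega⟩ : Fin m) then 1/(K:ℝ) else 0)
        + (if i = (⟨m - 1, by omega⟩ : Fin m) then 1/(K:ℝ) else 0) := by
    intro i
    unfold qEx marg
    rw [count_tau m K hm hK]
    have hmm : (((⟨0, by omega⟩ : Fin m)) : ℕ) = 0 := rfl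
    have hmL : (((⟨m - 1, by omega⟩ : Fin m)) : ℕ) = m - 1 := rfl
    by_cases hi0 : (i : ℕ) = 0
    · have hne : ¬ (i : ℕ) = m - 1 := by omega
      have e0 : i = (⟨0, by omega⟩ : Fin m) := Fin.ext (by rw [hmm]; exact hi0)
      have eL : ¬ i = (⟨m - 1, by omega⟩ : Fin m) := by
        intro h; exact hne (by rw [h])
      rw [if_neg hne, if_pos hi0, if_pos e0, if_neg eL]
      push_cast
      rw [show (1:ℝ)/K - 2/K = -(1/K) by ring, abs_neg, abs_of_nonneg (by positivity)]
      ring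
    · have e0 : ¬ i = (⟨0, by omega⟩ : Fin m) := by
        intro h; exact hi0 (by rw [h])
      by_cases hi : (i : ℕ) = m - 1
      · have eL : i = (⟨m - 1, by omega⟩ : Fin m) := Fin.ext (by rw [hmL]; exact hi)
        rw [if_pos hi, if_neg hi0, if_pos hi, if_neg e0, if_pos eL]
        rw [Nat.cast_sub hK]
        rw [show ((K:ℝ) - m + 1)/K - ((K:ℝ) - m)/K = 1/K by ring,
          abs_of_nonneg (by positivity)]
        ring
      · have eL : ¬ i = (⟨m - 1, by omega⟩ : Fin m) := by
          intro h; exact hi (by rw [h])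
        rw [if_neg hi, if_neg hi0, if_neg hi, Nat.cast_one, if_neg e0, if_neg eL]
        simp
  rw [Finset.sum_congr rfl (fun i _ => hsummand i), Finset.sum_add_distrib,
    Finset.sum_ite_eq' univ, Finset.sum_ite_eq' univ, if_pos (mem_univ _),
    if_pos (mem_univ _)]
  ring

lemma lying_sum (m K : ℕ) (hm : 2 ≤ m) (hK : m ≤ K) :
    ∑ k : Fin K, uEx m (thStar m K hm k, tauV m K hm k) = (m : ℝ) - 1 := by
  have h : ∀ k : Fin K, uEx m (thStar m K hm k, tauV m K hm k)
      = if 1 ≤ (k : ℕ) ∧ (k : ℕ) ≤ m - 1 then (1:ℝ) else 0 := by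
    intro k
    by_cases hk : 1 ≤ (k : ℕ) ∧ (k : ℕ) ≤ m - 1
    · rw [if_pos hk]
      apply uEx_gt'
      rw [Fin.lt_def]
      simp only [thStar, tauV]
      omega
    · rw [if_neg hk]
      have heq : thStar m K hm k = tauV m K hm k := by
        apply Fin.ext
        simp only [thStar, tauV]
        omega
      rw [heq, uEx_self']
  rw [Finset.sum_congr rfl (fun k _ => h k), Finset.sum_boole,
    card_filter_fin' K (fun n => 1 ≤ n ∧ n ≤ m - 1)]
  have h2 : (Finset.range K).filter (fun n => 1 ≤ n ∧ n ≤ m - 1)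
      = Finset.Icc 1 (m - 1) := by
    ext n; simp [Finset.mem_Icc]; omega
  rw [h2, Nat.card_Icc]
  rw [show m - 1 + 1 - 1 = m - 1 by omega, Nat.cast_sub (by omega), Nat.cast_one]

/-- Tightness of the constant `|Θ| − 1`. In the example
with `Θ = X = Fin m`, utility `uEx m`, the deterministic social choice function
`ℓ ↦ δ_ℓ`, and quota `qEx m K`: (a) the social choice function is cyclically
monotone, and (b) for every `ε > 0` no incentive-compatible mechanism
`f : Θ^K → Δ(X)^K` achieves an ex-post decision error bound with constant
`m − 1 − ε`. -/
theorem quota_constant_tight (m K : ℕ) (hm : 2 ≤ m) (hK : m ≤ K) :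
    CyclMonoSCF (uEx m) (fun ℓ : Fin m => delta ℓ) ∧
      ∀ ε : ℝ, 0 < ε →
        ¬∃ f : (Fin K → Fin m) → (Fin K → Fin m → ℝ),
          (∀ θv k, IsProbVec (f θv k)) ∧
          (∀ θv θv' : Fin K → Fin m,
            (∑ k, ubar (uEx m) (f θv' k) (θv k)) / K ≤
              (∑ k, ubar (uEx m) (f θv k) (θv k)) / K) ∧
          (∀ θv : Fin K → Fin m,
            (∑ k, tv (f θv k) (delta (θv k))) / K ≤
              ((m : ℝ) - 1 - ε) * tv (qEx m K) (marg K θv)) := by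
  refine ⟨partA' m hm, ?_⟩
  rintro ε hε ⟨f, hprob, hIC, herr⟩
  have hK0 : (0:ℝ) < K := by exact_mod_cast (by omega : 0 < K)
  set θs := thStar m K hm with hθs
  set τ := tauV m K hm with hτ
  -- f θs k = delta (θs k)
  have hfθ : ∀ k, f θs k = delta (θs k) := by
    have hE := herr θs
    rw [marg_thStar m K hm hK] at hE
    have htv0 : tv (qEx m K) (qEx m K) = 0 := by simp [tv]
    rw [htv0, mul_zero] at hE
    have hnn : 0 ≤ ∑ k, tv (f θs k) (delta (θs k)) :=
      Finset.sum_nonneg fun k _ => tv_nonneg' _ _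
    have hsum0 : ∑ k, tv (f θs k) (delta (θs k)) = 0 := by
      have := div_nonneg hnn hK0.le
      have h2 : (∑ k, tv (f θs k) (delta (θs k))) / K = 0 := le_antisymm hE this
      rcases div_eq_zero_iff.mp h2 with h | h
      · exact h
      · exact absurd h (ne_of_gt hK0)
    intro k
    exact eq_of_tv_eq_zero'
      ((Finset.sum_eq_zero_iff_of_nonneg fun k _ => tv_nonneg' _ _).mp hsum0 k (mem_univ k))
  -- lying utility equals m - 1
  have hlie : ∑ k, ubar (uEx m) (f θs k) (τ k) = (m:ℝ) - 1 := by
    rw [Finset.sum_congr rfl (fun k _ => by rw [hfθ k, ubar_delta'])]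
    exact lying_sum m K hm hK
  -- chain
  have hICτ := hIC τ θs
  rw [hlie] at hICτ
  have htruth : (∑ k, ubar (uEx m) (f τ k) (τ k)) ≤ ∑ k, tv (f τ k) (delta (τ k)) :=
    Finset.sum_le_sum fun k _ => ubar_le_tv' (hprob τ k).1 (hprob τ k).2 _
  have hB := herr τ
  rw [tv_qEx_marg_tau m K hm hK] at hB
  have h1 : ((m:ℝ) - 1) / K ≤ (∑ k, tv (f τ k) (delta (τ k))) / K :=
    le_trans hICτ ((div_le_div_iff_of_pos_right hK0).mpr htruth)
  have h2 : ((m:ℝ) - 1) / K ≤ ((m:ℝ) - 1 - ε) / K := by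
    have h := le_trans h1 hB
    rwa [mul_one_div] at h
  have hc1 : ((m:ℝ) - 1) / K * K = (m:ℝ) - 1 := div_mul_cancel₀ _ (ne_of_gt hK0)
  have hc2 : ((m:ℝ) - 1 - ε) / K * K = (m:ℝ) - 1 - ε := div_mul_cancel₀ _ (ne_of_gt hK0)
  have h3 := mul_le_mul_of_nonneg_right h2 hK0.le
  rw [hc1, hc2] at h3
  linarith
end
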